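/- Let q be a prime power and ℓ, m ≥ 1 be integers such that ℓ, m, q are pairwise coprime. Set x = S_ℓ ⊗ I_m, y = I_ℓ ⊗ S_m, z = xy, and let a, b ∈ F_q[X] be polynomials. Put A = a(z), B = b(z), H_X = [A | B], H_Z = [Bᵀ | −Aᵀ], and let h = gcd(a, b, X^{ℓm} − 1) in F_q[X]. Then the code dimension satisfies k := 2ℓm − rank_{F_q}(H_X) − rank_{F_q}(H_Z) = 2 · deg(h). -/

import Mathlib

open Matrix Kronecker Polynomial

/-- The ℓ×ℓ cyclic shift matrix over `F`: entry `(i,j)` is 1 iff `j ≡ i+1 (mod ℓ)`. -/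
def cyclicShift (ℓ : ℕ) [NeZero ℓ] (F : Type*) [Zero F] [One F] :
    Matrix (ZMod ℓ) (ZMod ℓ) F :=
  fun i j => if j = i + 1 then 1 else 0

lemma crt_exists (ℓ m : ℕ) [NeZero ℓ] [NeZero m] (hlm : Nat.Coprime ℓ m)
    (u : ZMod ℓ) (v : ZMod m) :
    ∃ k : ℕ, (k : ZMod ℓ) = u ∧ (k : ZMod m) = v := by
  let crt := ZMod.chineseRemainder hlm
  set t := crt.symm (u, v) with ht
  refine ⟨t.val, ?_⟩
  have h1 : crt t = (u,v) := crt.apply_symm_apply _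
  have h2 : ((t.val : ℕ) : ZMod (ℓ*m)) = t := ZMod.natCast_val _ |>.trans (ZMod.cast_id _ _)
  have h3 : ((u,v) : ZMod ℓ × ZMod m) = (((t.val : ℕ) : ZMod ℓ), ((t.val : ℕ) : ZMod m)) := by
    rw [← h1, ← h2, map_natCast]
    simp [Prod.ext_iff]
  rw [Prod.ext_iff] at h3
  exact ⟨h3.1.symm, h3.2.symm⟩

lemma finrank_range_comp_mulLeft {F V : Type*} [Field F] [AddCommGroup V] [Module F V]
    (Φ : Polynomial F →ₗ[F] V) (f c : Polynomial F) (hf : f ≠ 0)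
    (hker : ∀ p, Φ p = 0 ↔ f ∣ p) (hc : c ∣ f) :
    Module.finrank F (LinearMap.range (Φ ∘ₗ LinearMap.mulLeft F c)) =
      f.natDegree - c.natDegree := by
  obtain ⟨g, hg⟩ := hc
  have hc0 : c ≠ 0 := fun h0 => hf (by simp [hg, h0])
  have hg0 : g ≠ 0 := fun h0 => hf (by simp [hg, h0])
  set d := g.natDegree with hd
  set e : Polynomial.degreeLT F d →ₗ[F] V :=
    (Φ ∘ₗ LinearMap.mulLeft F c) ∘ₗ (Submodule.subtype _) with he
  have hrange : LinearMap.range e = LinearMap.range (Φ ∘ₗ LinearMap.mulLeft F c) := by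
    apply le_antisymm
    · rintro _ ⟨⟨p, hp⟩, rfl⟩; exact ⟨p, rfl⟩
    · rintro _ ⟨p, rfl⟩
      set g1 : Polynomial F := g * Polynomial.C (g.leadingCoeff)⁻¹ with hg1
      have hg1m : g1.Monic := Polynomial.monic_mul_leadingCoeff_inv hg0
      have hdeg1 : g1.degree = g.degree := by
        rw [hg1, Polynomial.degree_mul, Polynomial.degree_C (by simp [hg0]), add_zero]
      refine ⟨⟨p %ₘ g1, ?_⟩, ?_⟩
      · have := Polynomial.degree_modByMonic_lt p hg1m
        rw [hdeg1] at this
        exact Polynomial.mem_degreeLT.2 (lt_of_lt_of_le this (Polynomial.degree_le_natDegree))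
      · have hsplit : p %ₘ g1 + g1 * (p /ₘ g1) = p := Polynomial.modByMonic_add_div p g1
        have heq : Φ (c * p) = Φ (c * (p %ₘ g1)) + Φ (c * (g1 * (p /ₘ g1))) := by
          rw [← map_add, ← mul_add, hsplit]
        have hz : Φ (c * (g1 * (p /ₘ g1))) = 0 := by
          rw [hker]
          refine ⟨Polynomial.C (g.leadingCoeff)⁻¹ * (p /ₘ g1), ?_⟩
          rw [hg, hg1]; ring
        show Φ (c * (p %ₘ g1)) = Φ (c * p)
        rw [heq, hz, add_zero]
  have hinj : Function.Injective e := by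
    rw [← LinearMap.ker_eq_bot, Submodule.eq_bot_iff]
    rintro ⟨p, hp⟩ hmem
    have h0 : Φ (c * p) = 0 := hmem
    rw [hker, hg] at h0
    have hdvd : g ∣ p := (mul_dvd_mul_iff_left hc0).1 h0
    have hp0 : p = 0 := by
      by_contra hne
      have h1 : g.degree ≤ p.degree := Polynomial.degree_le_of_dvd hdvd hne
      have h2 : p.degree < (d : WithBot ℕ) := Polynomial.mem_degreeLT.1 hp
      rw [Polynomial.degree_eq_natDegree hg0] at h1
      exact absurd (lt_of_le_of_lt h1 h2) (lt_irrefl _)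
    simp [hp0]
  have h1 : Module.finrank F (LinearMap.range e) = d := by
    rw [LinearMap.finrank_range_of_inj hinj]
    simpa using (Polynomial.degreeLTEquiv F d).finrank_eq
  rw [← hrange, h1]
  have : f.natDegree = c.natDegree + g.natDegree := by
    rw [hg, Polynomial.natDegree_mul hc0 hg0]
  omega

/-- coprime qudit bivariate bicycle codes.  For `ℓ, m, q` pairwise coprime,
`z = xy`, `A = a(z)`, `B = b(z)`, `H_X = [A | B]`, `H_Z = [Bᵀ | −Aᵀ]`, and
`h = gcd(a, b, X^{ℓm} − 1)`, the code dimension is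
`k = 2ℓm − rank H_X − rank H_Z = 2 · deg h`. -/
theorem coprime_bb_code_dimension
    {F : Type*} [Field F] [Fintype F] [DecidableEq F] (ℓ m : ℕ) [NeZero ℓ] [NeZero m]
    (hlm : Nat.Coprime ℓ m) (hlq : Nat.Coprime ℓ (Fintype.card F))
    (hmq : Nat.Coprime m (Fintype.card F))
    (x y z : Matrix (ZMod ℓ × ZMod m) (ZMod ℓ × ZMod m) F)
    (hx : x = cyclicShift ℓ F ⊗ₖ (1 : Matrix (ZMod m) (ZMod m) F))
    (hy : y = (1 : Matrix (ZMod ℓ) (ZMod ℓ) F) ⊗ₖ cyclicShift m F)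
    (hz : z = x * y)
    (a b : Polynomial F)
    (A B : Matrix (ZMod ℓ × ZMod m) (ZMod ℓ × ZMod m) F)
    (hA : A = Polynomial.aeval z a) (hB : B = Polynomial.aeval z b)
    (HX HZ : Matrix (ZMod ℓ × ZMod m) ((ZMod ℓ × ZMod m) ⊕ (ZMod ℓ × ZMod m)) F)
    (hHX : HX = fromCols A B)
    (hHZ : HZ = fromCols Bᵀ (-Aᵀ))
    (h : Polynomial F)
    (hgcd : h = EuclideanDomain.gcd a (EuclideanDomain.gcd b (X ^ (ℓ * m) - 1))) :
    (2 * (ℓ * m) : ℤ) - HX.rank - HZ.rank = 2 * h.natDegree := by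
  classical
  set n := ℓ * m with hn
  have hl0 : ℓ ≠ 0 := NeZero.ne ℓ
  have hm0 : m ≠ 0 := NeZero.ne m
  have hnpos : 0 < n := Nat.pos_of_ne_zero (by simp [hn, hl0, hm0])
  set f : Polynomial F := X ^ n - 1 with hf
  have hfm : f.Monic := by
    have := Polynomial.monic_X_pow_sub_C (1 : F) hnpos.ne'
    simpa [hf] using this
  have hf0 : f ≠ 0 := hfm.ne_zero
  have hfdeg : f.natDegree = n := by
    have : (X ^ n - Polynomial.C (1:F)).natDegree = n := Polynomial.natDegree_X_pow_sub_C
    simpa [hf] using this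
  -- the action of z on vectors
  have hzv : ∀ v : ZMod ℓ × ZMod m → F, z *ᵥ v = fun ij => v (ij.1 + 1, ij.2 + 1) := by
    intro v
    have hyv : y *ᵥ v = fun ij => v (ij.1, ij.2 + 1) := by
      funext ij
      obtain ⟨i, j⟩ := ij
      simp only [hy, Matrix.mulVec, dotProduct, Fintype.sum_prod_type,
        kroneckerMap_apply, cyclicShift, Matrix.one_apply]
      simp [ite_mul, mul_ite, Finset.sum_ite_eq, Finset.sum_ite_eq']
    have hxv : ∀ w : ZMod ℓ × ZMod m → F, x *ᵥ w = fun ij => w (ij.1 + 1, ij.2) := by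
      intro w
      funext ij
      obtain ⟨i, j⟩ := ij
      simp only [hx, Matrix.mulVec, dotProduct, Fintype.sum_prod_type,
        kroneckerMap_apply, cyclicShift, Matrix.one_apply]
      simp [ite_mul, mul_ite, Finset.sum_ite_eq, Finset.sum_ite_eq']
    rw [hz, ← Matrix.mulVec_mulVec, hyv, hxv]
  have hzpow : ∀ (k : ℕ) (v : ZMod ℓ × ZMod m → F),
      (z ^ k) *ᵥ v = fun ij => v (ij.1 + (k : ZMod ℓ), ij.2 + (k : ZMod m)) := by
    intro k
    induction k with
    | zero => intro v; simp [Matrix.one_mulVec]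
    | succ k ih =>
      intro v
      rw [pow_succ, ← Matrix.mulVec_mulVec, ih (z *ᵥ v), hzv v]
      funext ij
      push_cast
      ring_nf
  -- the cyclic vector and the evaluation map Φ
  set e0 : ZMod ℓ × ZMod m → F := Pi.single ((0 : ZMod ℓ), (0 : ZMod m)) 1 with he0
  set Φ : Polynomial F →ₗ[F] (ZMod ℓ × ZMod m → F) :=
    { toFun := fun p => (Polynomial.aeval z p) *ᵥ e0
      map_add' := fun p q => by
        show (Polynomial.aeval z (p + q)) *ᵥ e0 = _
        rw [map_add, Matrix.add_mulVec]
      map_smul' := fun c p => by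
        show (Polynomial.aeval z (c • p)) *ᵥ e0 = _
        rw [_root_.map_smul, Matrix.smul_mulVec]; rfl } with hΦ
  have hΦdef : ∀ p, Φ p = (Polynomial.aeval z p) *ᵥ e0 := fun p => rfl
  have hmulΦ : ∀ p q, (Polynomial.aeval z p) *ᵥ (Φ q) = Φ (p * q) := by
    intro p q
    rw [hΦdef, hΦdef, Matrix.mulVec_mulVec, ← _root_.map_mul]
  set τ : ℕ → ZMod ℓ × ZMod m := fun k => (-(k : ZMod ℓ), -(k : ZMod m)) with hτ
  have hsingle : ∀ k : ℕ, (z ^ k) *ᵥ e0 = Pi.single (τ k) 1 := by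
    intro k
    rw [hzpow k e0]
    funext ij
    obtain ⟨i, j⟩ := ij
    simp only [he0, hτ]
    rw [Pi.single_apply, Pi.single_apply]
    have hcond : ((i + (k:ZMod ℓ), j + (k:ZMod m)) = ((0:ZMod ℓ), (0:ZMod m)))
        ↔ ((i, j) = (-(k:ZMod ℓ), -(k:ZMod m))) := by
      simp only [Prod.mk.injEq]
      constructor
      · rintro ⟨h1, h2⟩
        exact ⟨eq_neg_of_add_eq_zero_left h1, eq_neg_of_add_eq_zero_left h2⟩
      · rintro ⟨h1, h2⟩
        subst h1; subst h2
        constructor <;> ring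
    rw [if_congr hcond rfl rfl]
  have hΦpow : ∀ k : ℕ, Φ (X ^ k) = Pi.single (τ k) 1 := by
    intro k
    rw [hΦdef, map_pow, Polynomial.aeval_X, hsingle]
  -- surjectivity of Φ
  have hsurj : ∀ v : ZMod ℓ × ZMod m → F, ∃ p, Φ p = v := by
    intro v
    have hsingle' : ∀ ij : ZMod ℓ × ZMod m, ∃ k : ℕ, τ k = ij := by
      intro ij
      obtain ⟨k, hk1, hk2⟩ := crt_exists ℓ m hlm (-ij.1) (-ij.2)
      exact ⟨k, by simp [hτ, hk1, hk2]⟩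
    choose κ hκ using hsingle'
    refine ⟨∑ ij : ZMod ℓ × ZMod m, v ij • X ^ κ ij, ?_⟩
    rw [map_sum]
    have : ∀ ij : ZMod ℓ × ZMod m, Φ (v ij • X ^ κ ij) = Pi.single ij (v ij) := by
      intro ij
      rw [_root_.map_smul, hΦpow, hκ]
      funext w
      by_cases hw : w = ij
      · subst hw; simp
      · simp [hw]
    simp_rw [this]
    exact Finset.univ_sum_single v
  -- zero facts
  have hfz : ∀ w : ZMod ℓ × ZMod m → F, (Polynomial.aeval z f) *ᵥ w = 0 := by
    intro w
    have hnl : ((n : ℕ) : ZMod ℓ) = 0 := by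
      rw [hn]; push_cast; simp
    have hnm : ((n : ℕ) : ZMod m) = 0 := by
      rw [hn]; push_cast; simp
    rw [hf, map_sub, map_pow, Polynomial.aeval_X, _root_.map_one, Matrix.sub_mulVec,
      Matrix.one_mulVec, hzpow]
    funext ij
    simp [hnl, hnm]
  have hfdvd0 : ∀ p, f ∣ p → Φ p = 0 := by
    rintro _ ⟨q, rfl⟩
    rw [← hmulΦ, hfz]
  -- injectivity of τ on range n
  have hτinj : ∀ k1 k2, k1 < n → k2 < n → τ k1 = τ k2 → k1 = k2 := by
    intro k1 k2 h1 h2 heq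
    rw [hτ, Prod.mk.injEq, neg_inj, neg_inj] at heq
    have e1 : k1 ≡ k2 [MOD ℓ] := (ZMod.natCast_eq_natCast_iff _ _ _).1 heq.1
    have e2 : k1 ≡ k2 [MOD m] := (ZMod.natCast_eq_natCast_iff _ _ _).1 heq.2
    have := (Nat.modEq_and_modEq_iff_modEq_mul hlm).1 ⟨e1, e2⟩
    exact Nat.ModEq.eq_of_lt_of_lt this h1 h2
  -- the kernel of Φ
  have hker : ∀ p, Φ p = 0 ↔ f ∣ p := by
    intro p
    refine ⟨fun hp0 => ?_, hfdvd0 p⟩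
    set r := p %ₘ f with hr
    have hsplit : r + f * (p /ₘ f) = p := Polynomial.modByMonic_add_div p f
    have hΦr : Φ r = 0 := by
      have : Φ p = Φ r + Φ (f * (p /ₘ f)) := by rw [← map_add, hsplit]
      rw [hp0, hfdvd0 _ ⟨_, rfl⟩, add_zero] at this
      exact this.symm
    have hdegr : r.natDegree < n := by
      rcases eq_or_ne r 0 with h0 | h0
      · simpa [h0] using hnpos
      · rw [Polynomial.natDegree_lt_iff_degree_lt h0]
        have := Polynomial.degree_modByMonic_lt p hfm
        rwa [Polynomial.degree_eq_natDegree hf0, hfdeg] at this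
    have hr0 : r = 0 := by
      have hrsum : Φ r = ∑ i ∈ Finset.range n,
          r.coeff i • (Pi.single (τ i) 1 : ZMod ℓ × ZMod m → F) := by
        have hrs : r = ∑ i ∈ Finset.range n, r.coeff i • X ^ i := by
          conv_lhs => rw [Polynomial.as_sum_range' r n hdegr]
          simp [Polynomial.smul_X_eq_monomial]
        calc Φ r = Φ (∑ i ∈ Finset.range n, r.coeff i • X ^ i) := by rw [← hrs]
          _ = ∑ i ∈ Finset.range n, r.coeff i • Φ (X ^ i) := by
              rw [map_sum]; simp_rw [_root_.map_smul]
          _ = _ := by simp_rw [hΦpow]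
      have hcoeff : ∀ k, k < n → r.coeff k = 0 := by
        intro k hk
        have := congrFun (hrsum.symm.trans hΦr) (τ k)
        simp only [Finset.sum_apply, Pi.smul_apply, Pi.single_apply, Pi.zero_apply,
          smul_eq_mul] at this
        rw [Finset.sum_congr rfl (fun i hi => ?_)] at this
        · rwa [Finset.sum_ite_eq' (Finset.range n) k r.coeff,
            if_pos (Finset.mem_range.2 hk)] at this
        · show r.coeff i * (if τ k = τ i then (1:F) else 0) = if i = k then r.coeff i else 0
          by_cases hik : i = k
          · simp [hik]
          · have : ¬ τ k = τ i := fun hταβ =>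
              hik (hτinj i k (Finset.mem_range.1 hi) hk hταβ.symm)
            simp [hik, this]
      ext k
      rcases lt_or_ge k n with hk | hk
      · simpa using hcoeff k hk
      · simp [Polynomial.coeff_eq_zero_of_natDegree_lt (lt_of_lt_of_le hdegr hk)]
    rw [← hsplit, hr0, zero_add]
    exact ⟨_, rfl⟩
  -- gcd facts
  have hha : h ∣ a := hgcd ▸ EuclideanDomain.gcd_dvd_left _ _
  have hhbf : h ∣ EuclideanDomain.gcd b f := hgcd ▸ EuclideanDomain.gcd_dvd_right _ _
  have hhb : h ∣ b := hhbf.trans (EuclideanDomain.gcd_dvd_left _ _)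
  have hhf : h ∣ f := hhbf.trans (EuclideanDomain.gcd_dvd_right _ _)
  have hh0 : h ≠ 0 := by
    intro h0
    rw [h0] at hgcd
    have := (EuclideanDomain.gcd_eq_zero_iff.1 hgcd.symm).2
    exact hf0 (EuclideanDomain.gcd_eq_zero_iff.1 this).2
  have hbez : ∃ u v w : Polynomial F, h = a * u + b * v + f * w := by
    set w0 := EuclideanDomain.gcd b f with hw0
    obtain ⟨u0, v0, e1⟩ : ∃ u v, h = a * u + w0 * v :=
      ⟨_, _, by rw [hgcd]; exact EuclideanDomain.gcd_eq_gcd_ab a w0⟩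
    obtain ⟨u1, v1, e2⟩ : ∃ u v, w0 = b * u + f * v :=
      ⟨_, _, EuclideanDomain.gcd_eq_gcd_ab b f⟩
    exact ⟨u0, u1 * v0, v1 * v0, by rw [e1, e2]; ring⟩
  obtain ⟨g0, hg0⟩ := id hhf
  have hg00 : g0 ≠ 0 := fun h0 => hf0 (by simp [hg0, h0])
  have hdle : h.natDegree ≤ n := hfdeg ▸ Polynomial.natDegree_le_of_dvd hhf hf0
  have hdegsum : n = h.natDegree + g0.natDegree := by
    rw [← hfdeg, hg0, Polynomial.natDegree_mul hh0 hg00]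
  -- matrix actions through Φ
  have hAΦ : ∀ p, A *ᵥ Φ p = Φ (a * p) := fun p => by rw [hA, hmulΦ]
  have hBΦ : ∀ p, B *ᵥ Φ p = Φ (b * p) := fun p => by rw [hB, hmulΦ]
  -- rank of HX
  have hrkX : HX.rank = n - h.natDegree := by
    have hXrange : LinearMap.range (Matrix.mulVecLin HX)
        = LinearMap.range (Φ ∘ₗ LinearMap.mulLeft F h) := by
      obtain ⟨a1, ha1⟩ := hha
      obtain ⟨b1, hb1⟩ := hhb
      apply le_antisymm
      · rintro w ⟨u, rfl⟩
        obtain ⟨p, hp⟩ := hsurj (u ∘ Sum.inl)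
        obtain ⟨q, hq⟩ := hsurj (u ∘ Sum.inr)
        have hu : u = Sum.elim (u ∘ Sum.inl) (u ∘ Sum.inr) := by
          funext s; cases s <;> rfl
        refine ⟨a1 * p + b1 * q, ?_⟩
        rw [LinearMap.comp_apply, LinearMap.mulLeft_apply, Matrix.mulVecLin_apply,
          hHX, hu, Matrix.fromCols_mulVec_sumElim, ← hp, ← hq, hAΦ, hBΦ, ← map_add]
        congr 1
        rw [ha1, hb1]; ring
      · rintro w ⟨r, rfl⟩
        obtain ⟨u, v, w', hbezeq⟩ := hbez
        refine ⟨Sum.elim (Φ (u * r)) (Φ (v * r)), ?_⟩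
        rw [Matrix.mulVecLin_apply, hHX, Matrix.fromCols_mulVec_sumElim, hAΦ, hBΦ,
          LinearMap.comp_apply, LinearMap.mulLeft_apply]
        have hhr : h * r = a * (u * r) + b * (v * r) + f * (w' * r) := by
          rw [hbezeq]; ring
        rw [hhr, map_add, hfdvd0 _ ⟨_, rfl⟩, add_zero, map_add]
    rw [Matrix.rank, hXrange, finrank_range_comp_mulLeft Φ f h hf0 hker hhf, hfdeg]
  -- rank of HZ
  have hrkZ : HZ.rank = n - h.natDegree := by
    have hZt : HZᵀ = fromRows B (-A) := by
      rw [hHZ, Matrix.transpose_fromCols, Matrix.transpose_transpose,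
        Matrix.transpose_neg, Matrix.transpose_transpose]
    have hrkZ0 : HZ.rank = (fromRows B (-A)).rank := by
      rw [← hZt, Matrix.rank_transpose]
    have hkerZ : LinearMap.ker (Matrix.mulVecLin (fromRows B (-A)))
        = LinearMap.range (Φ ∘ₗ LinearMap.mulLeft F g0) := by
      obtain ⟨a1, ha1⟩ := hha
      obtain ⟨b1, hb1⟩ := hhb
      apply le_antisymm
      · rintro v hv
        rw [LinearMap.mem_ker, Matrix.mulVecLin_apply, Matrix.fromRows_mulVec] at hv
        have hBv : B *ᵥ v = 0 := by
          funext i; exact congrFun hv (Sum.inl i)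
        have hAv : A *ᵥ v = 0 := by
          have : (-A) *ᵥ v = 0 := by funext i; exact congrFun hv (Sum.inr i)
          rw [Matrix.neg_mulVec, neg_eq_zero] at this
          exact this
        obtain ⟨p, hp⟩ := hsurj v
        rw [← hp, hAΦ] at hAv
        rw [← hp, hBΦ] at hBv
        have hfa : f ∣ a * p := (hker _).1 hAv
        have hfb : f ∣ b * p := (hker _).1 hBv
        obtain ⟨u, v', w', hbezeq⟩ := hbez
        have hfhp : f ∣ h * p := by
          have : h * p = (a * p) * u + (b * p) * v' + f * (w' * p) := by
            rw [hbezeq]; ring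
          rw [this]
          exact dvd_add (dvd_add (hfa.mul_right u) (hfb.mul_right v')) ⟨_, rfl⟩
        rw [hg0] at hfhp
        have hg0p : g0 ∣ p := (mul_dvd_mul_iff_left hh0).1 hfhp
        obtain ⟨p1, hp1⟩ := hg0p
        refine ⟨p1, ?_⟩
        rw [LinearMap.comp_apply, LinearMap.mulLeft_apply, ← hp1, hp]
      · rintro _ ⟨r, rfl⟩
        rw [LinearMap.mem_ker, LinearMap.comp_apply, LinearMap.mulLeft_apply,
          Matrix.mulVecLin_apply, Matrix.fromRows_mulVec]
        have hAz : A *ᵥ Φ (g0 * r) = 0 := by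
          rw [hAΦ]
          apply hfdvd0
          exact ⟨a1 * r, by rw [hg0, ha1]; ring⟩
        have hBz : B *ᵥ Φ (g0 * r) = 0 := by
          rw [hBΦ]
          apply hfdvd0
          exact ⟨b1 * r, by rw [hg0, hb1]; ring⟩
        rw [hBz, Matrix.neg_mulVec, hAz]
        funext s; cases s <;> simp
    have hg0f : g0 ∣ f := ⟨h, by rw [hg0]; ring⟩
    have hkerdim : Module.finrank F (LinearMap.ker (Matrix.mulVecLin (fromRows B (-A))))
        = h.natDegree := by
      rw [hkerZ, finrank_range_comp_mulLeft Φ f g0 hf0 hker hg0f, hfdeg]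
      omega
    have hrn := LinearMap.finrank_range_add_finrank_ker (Matrix.mulVecLin (fromRows B (-A)))
    have hdom : Module.finrank F (ZMod ℓ × ZMod m → F) = n := by
      rw [Module.finrank_pi]
      simp [hn]
    rw [hdom, hkerdim] at hrn
    rw [hrkZ0, Matrix.rank]
    omega
  rw [hrkX, hrkZ]
  omega
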